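/- Let L and L′ be complex Lie algebras admitting bases e₁,…,e₅ and f₁,…,f₅ respectively, whose only nonzero brackets among basis vectors (up to antisymmetry) are: in L: [e₂,e₃]=e₁, [e₃,e₄]=e₂, [e₃,e₅]=e₄, [e₄,e₅]=e₁; in L′: [f₃,f₄]=f₂, [f₁,f₅]=f₂, [f₃,f₅]=f₁, [f₄,f₅]=f₃. Then L and L′ are isomorphic as Lie algebras over ℂ. -/

import Mathlib

set_option maxHeartbeats 1000000


/-- `Realizes L c` means that the complex Lie algebra `L` admits a basis `e₁, …, e₅`
(indexed by `Fin 5`) in which the brackets of basis vectors are given by the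
structure constants `c`, i.e. `⁅eᵢ, eⱼ⁆ = ∑ₖ c i j k • eₖ` for all `i < j`,
all brackets of basis vectors being determined by these via antisymmetry. -/
def Realizes (L : Type) [LieRing L] [LieAlgebra ℂ L]
    (c : Fin 5 → Fin 5 → Fin 5 → ℂ) : Prop :=
  ∃ e : Module.Basis (Fin 5) ℂ L, ∀ i j : Fin 5, i < j →
    ⁅e i, e j⁆ = ∑ k, c i j k • e k

/-- The nilpotent pattern `d₉(0:0)`: `[e₂,e₃]=e₁`, `[e₃,e₄]=e₂`, `[e₃,e₅]=e₄`, `[e₄,e₅]=e₁`. -/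
def patternL : Fin 5 → Fin 5 → Fin 5 → ℂ := fun i j =>
  if i = 1 ∧ j = 2 then ![1, 0, 0, 0, 0]
  else if i = 2 ∧ j = 3 then ![0, 1, 0, 0, 0]
  else if i = 2 ∧ j = 4 then ![0, 0, 0, 1, 0]
  else if i = 3 ∧ j = 4 then ![1, 0, 0, 0, 0]
  else 0

/-- The nilpotent pattern `d₁₂(0:0:0)`: `[f₃,f₄]=f₂`, `[f₁,f₅]=f₂`, `[f₃,f₅]=f₁`, `[f₄,f₅]=f₃`. -/
def patternL' : Fin 5 → Fin 5 → Fin 5 → ℂ := fun i j =>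
  if i = 2 ∧ j = 3 then ![0, 1, 0, 0, 0]
  else if i = 0 ∧ j = 4 then ![0, 1, 0, 0, 0]
  else if i = 2 ∧ j = 4 then ![1, 0, 0, 0, 0]
  else if i = 3 ∧ j = 4 then ![0, 0, 1, 0, 0]
  else 0

/-- The nilpotent algebras `d₉(0:0)` and `d₁₂(0:0:0)` are isomorphic. -/
theorem d9_d12_generic_iso
    (L L' : Type) [LieRing L] [LieAlgebra ℂ L] [LieRing L'] [LieAlgebra ℂ L']
    (hL : Realizes L patternL) (hL' : Realizes L' patternL') :
    Nonempty (L ≃ₗ⁅ℂ⁆ L') := by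
  obtain ⟨e, he⟩ := hL
  obtain ⟨f, hf⟩ := hL'
  -- bracket tables
  have e01 : ⁅e 0, e 1⁆ = 0 := by
    have := he 0 1 (by decide); simpa [patternL, Fin.sum_univ_five] using this
  have e02 : ⁅e 0, e 2⁆ = 0 := by
    have := he 0 2 (by decide); simpa [patternL, Fin.sum_univ_five] using this
  have e03 : ⁅e 0, e 3⁆ = 0 := by
    have := he 0 3 (by decide); simpa [patternL, Fin.sum_univ_five] using this
  have e04 : ⁅e 0, e 4⁆ = 0 := by
    have := he 0 4 (by decide); simpa [patternL, Fin.sum_univ_five] using this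
  have e12 : ⁅e 1, e 2⁆ = e 0 := by
    have := he 1 2 (by decide); simpa [patternL, Fin.sum_univ_five] using this
  have e13 : ⁅e 1, e 3⁆ = 0 := by
    have := he 1 3 (by decide); simpa [patternL, Fin.sum_univ_five] using this
  have e14 : ⁅e 1, e 4⁆ = 0 := by
    have := he 1 4 (by decide); simpa [patternL, Fin.sum_univ_five] using this
  have e23 : ⁅e 2, e 3⁆ = e 1 := by
    have := he 2 3 (by decide); simpa [patternL, Fin.sum_univ_five] using this
  have e24 : ⁅e 2, e 4⁆ = e 3 := by
    have := he 2 4 (by decide); simpa [patternL, Fin.sum_univ_five] using this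
  have e34 : ⁅e 3, e 4⁆ = e 0 := by
    have := he 3 4 (by decide); simpa [patternL, Fin.sum_univ_five] using this
  have f01 : ⁅f 0, f 1⁆ = 0 := by
    have := hf 0 1 (by decide); simpa [patternL', Fin.sum_univ_five] using this
  have f02 : ⁅f 0, f 2⁆ = 0 := by
    have := hf 0 2 (by decide); simpa [patternL', Fin.sum_univ_five] using this
  have f03 : ⁅f 0, f 3⁆ = 0 := by
    have := hf 0 3 (by decide); simpa [patternL', Fin.sum_univ_five] using this
  have f04 : ⁅f 0, f 4⁆ = f 1 := by
    have := hf 0 4 (by decide); simpa [patternL', Fin.sum_univ_five] using this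
  have f12 : ⁅f 1, f 2⁆ = 0 := by
    have := hf 1 2 (by decide); simpa [patternL', Fin.sum_univ_five] using this
  have f13 : ⁅f 1, f 3⁆ = 0 := by
    have := hf 1 3 (by decide); simpa [patternL', Fin.sum_univ_five] using this
  have f14 : ⁅f 1, f 4⁆ = 0 := by
    have := hf 1 4 (by decide); simpa [patternL', Fin.sum_univ_five] using this
  have f23 : ⁅f 2, f 3⁆ = f 1 := by
    have := hf 2 3 (by decide); simpa [patternL', Fin.sum_univ_five] using this
  have f24 : ⁅f 2, f 4⁆ = f 0 := by
    have := hf 2 4 (by decide); simpa [patternL', Fin.sum_univ_five] using this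
  have f34 : ⁅f 3, f 4⁆ = f 2 := by
    have := hf 3 4 (by decide); simpa [patternL', Fin.sum_univ_five] using this
  -- the maps
  set g : Fin 5 → L' := ![-(f 1), -(f 0), f 4, f 2, -(f 3)] with hg
  set h : Fin 5 → L := ![-(e 1), -(e 0), e 3, -(e 4), e 2] with hh
  set φ : L →ₗ[ℂ] L' := Module.Basis.constr e ℂ g with hφ
  set ψ : L' →ₗ[ℂ] L := Module.Basis.constr f ℂ h with hψ
  have φe : ∀ i, φ (e i) = g i := fun i => Module.Basis.constr_basis e ℂ g i
  have ψf : ∀ i, ψ (f i) = h i := fun i => Module.Basis.constr_basis f ℂ h i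
  have hψφ : ψ.comp φ = LinearMap.id := by
    apply Module.Basis.ext e
    intro i
    fin_cases i <;>
      simp [φe, ψf, hg, hh]
  have hφψ : φ.comp ψ = LinearMap.id := by
    apply Module.Basis.ext f
    intro i
    fin_cases i <;>
      simp [φe, ψf, hg, hh]
  let E : L ≃ₗ[ℂ] L' := LinearEquiv.ofLinear φ ψ hφψ hψφ
  have hb : ∀ i j : Fin 5, φ ⁅e i, e j⁆ = ⁅φ (e i), φ (e j)⁆ := by
    have sk : ∀ (a b : L), ⁅b, a⁆ = -⁅a, b⁆ := fun a b => by
      rw [← lie_skew]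
    have sk' : ∀ (a b : L'), ⁅b, a⁆ = -⁅a, b⁆ := fun a b => by
      rw [← lie_skew]
    intro i j
    fin_cases i <;> fin_cases j <;>
      simp [φe, hg, sk (e 0) (e 1), sk (e 0) (e 2), sk (e 0) (e 3), sk (e 0) (e 4),
        sk (e 1) (e 2), sk (e 1) (e 3), sk (e 1) (e 4), sk (e 2) (e 3), sk (e 2) (e 4),
        sk (e 3) (e 4), e01, e02, e03, e04, e12, e13, e14, e23, e24, e34,
        f01, f02, f03, f04, f12, f13, f14, f23, f24, f34,
        sk' (f 0) (f 1), sk' (f 0) (f 2), sk' (f 0) (f 3), sk' (f 0) (f 4),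
        sk' (f 1) (f 2), sk' (f 1) (f 3), sk' (f 1) (f 4), sk' (f 2) (f 3), sk' (f 2) (f 4),
        sk' (f 3) (f 4)]
  let B1 : L →ₗ[ℂ] L →ₗ[ℂ] L' := LinearMap.mk₂ ℂ (fun x y => φ ⁅x, y⁆)
    (fun x x' y => by simp only [add_lie, map_add])
    (fun c x y => by simp only [smul_lie, map_smul])
    (fun x y y' => by simp only [lie_add, map_add])
    (fun c x y => by simp only [lie_smul, map_smul])
  let B2 : L →ₗ[ℂ] L →ₗ[ℂ] L' := LinearMap.mk₂ ℂ (fun x y => ⁅φ x, φ y⁆)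
    (fun x x' y => by simp only [map_add, add_lie])
    (fun c x y => by simp only [map_smul, smul_lie])
    (fun x y y' => by simp only [map_add, lie_add])
    (fun c x y => by simp only [map_smul, lie_smul])
  have hB : B1 = B2 := by
    apply Module.Basis.ext e
    intro i
    apply Module.Basis.ext e
    intro j
    exact hb i j
  have key : ∀ x y : L, φ ⁅x, y⁆ = ⁅φ x, φ y⁆ := fun x y =>
    LinearMap.congr_fun (LinearMap.congr_fun hB x) y
  refine ⟨{ toLinearMap := φ, map_lie' := fun {x y} => key x y,
            invFun := ψ, left_inv := ?_, right_inv := ?_ }⟩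
  · intro x
    exact LinearMap.congr_fun hψφ x
  · intro x
    exact LinearMap.congr_fun hφψ x
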